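/- arXiv:math/0503691 — 9 statements merged into one kernel-verified Lean document; each statement's English description precedes it below -/
import Mathlib

section
/- Let m ≥ 2 and let A be an m×m real symmetric matrix satisfying 2·a_{i,j} < a_{i,i} + a_{j,j} for all i ≠ j (i.e., the induced subdivision of the Newton polytope of the corresponding tropical quadric is maximal in nodes). Let A* be the tropical adjoint of A. Then 2·(A*)_{i,j} < (A*)_{i,i} + (A*)_{j,j} for all i ≠ j (i.e., the dual subdivision is again maximal in nodes). -/
/-- The tropical determinant of an `m × m` real matrix: the maximum over all
permutations `σ` of `∑ k, M k (σ k)`. -/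
noncomputable def tropDet {m : ℕ} (M : Matrix (Fin m) (Fin m) ℝ) : ℝ :=
  Finset.univ.sup' Finset.univ_nonempty fun σ : Equiv.Perm (Fin m) => ∑ k, M k (σ k)

/-- The `(i,j)`-tropical minor: the tropical determinant of the submatrix obtained
by deleting row `i` and column `j`. -/
noncomputable def tropMinor {n : ℕ} (M : Matrix (Fin (n + 1)) (Fin (n + 1)) ℝ)
    (i j : Fin (n + 1)) : ℝ :=
  tropDet (M.submatrix i.succAbove j.succAbove)

/-- The tropical adjoint of a matrix: entries are the tropical minors. -/
noncomputable def tropAdj {n : ℕ} (M : Matrix (Fin (n + 1)) (Fin (n + 1)) ℝ) :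
    Matrix (Fin (n + 1)) (Fin (n + 1)) ℝ :=
  fun i j => tropMinor M i j

/-- If an `m × m` (here `m+1 × m+1`, `m+1 ≥ 2`) real symmetric matrix satisfies
`2 a i j < a i i + a j j` for all `i ≠ j` (the induced subdivision is maximal in
nodes), then its tropical adjoint satisfies the same inequalities (the dual
subdivision is again maximal in nodes). -/
theorem maximal_in_nodes_dual {m : ℕ} (hm : 1 ≤ m)
    (A : Matrix (Fin (m + 1)) (Fin (m + 1)) ℝ) (hsym : A.IsSymm)
    (h : ∀ i j : Fin (m + 1), i ≠ j → 2 * A i j < A i i + A j j) :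
    ∀ i j : Fin (m + 1), i ≠ j →
      2 * tropAdj A i j < tropAdj A i i + tropAdj A j j := by
  intro i j hij
  have hdiag : ∀ a b : Fin (m + 1), 2 * A a b ≤ A a a + A b b := by
    intro a b
    rcases eq_or_ne a b with rfl | hab
    · linarith
    · exact (h a b hab).le
  have hii : ∀ l : Fin (m + 1),
      (∑ k, A (l.succAbove k) (l.succAbove k)) ≤ tropAdj A l l := by
    intro l
    have := Finset.le_sup' (f := fun σ : Equiv.Perm (Fin m) =>
      ∑ k, A (l.succAbove k) (l.succAbove (σ k)))
      (Finset.mem_univ (1 : Equiv.Perm (Fin m)))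
    exact this
  obtain ⟨σ, -, hσeq⟩ := Finset.exists_mem_eq_sup' (Finset.univ_nonempty)
      (fun σ : Equiv.Perm (Fin m) => ∑ k, A (i.succAbove k) (j.succAbove (σ k)))
  have hmain : 2 * ∑ k, A (i.succAbove k) (j.succAbove (σ k)) <
      (∑ k, A (i.succAbove k) (i.succAbove k)) +
        ∑ k, A (j.succAbove k) (j.succAbove k) := by
    obtain ⟨k₁, hk₁⟩ := Fin.exists_succAbove_eq hij
    set k₀ := σ.symm k₁ with hk₀
    have hle : ∀ k ∈ Finset.univ, 2 * A (i.succAbove k) (j.succAbove (σ k)) ≤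
        A (i.succAbove k) (i.succAbove k) +
          A (j.succAbove (σ k)) (j.succAbove (σ k)) := fun k _ => hdiag _ _
    have hstrict : 2 * A (i.succAbove k₀) (j.succAbove (σ k₀)) <
        A (i.succAbove k₀) (i.succAbove k₀) +
          A (j.succAbove (σ k₀)) (j.succAbove (σ k₀)) := by
      apply h
      have hji : j.succAbove (σ k₀) = i := by
        rw [hk₀, Equiv.apply_symm_apply, hk₁]
      rw [hji]
      exact Fin.succAbove_ne i k₀
    calc 2 * ∑ k, A (i.succAbove k) (j.succAbove (σ k))
        = ∑ k, 2 * A (i.succAbove k) (j.succAbove (σ k)) := by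
          rw [Finset.mul_sum]
      _ < ∑ k, (A (i.succAbove k) (i.succAbove k) +
            A (j.succAbove (σ k)) (j.succAbove (σ k))) :=
          Finset.sum_lt_sum hle ⟨k₀, Finset.mem_univ _, hstrict⟩
      _ = _ := by
          rw [Finset.sum_add_distrib]
          congr 1
          exact Equiv.sum_comp σ (fun k => A (j.succAbove k) (j.succAbove k))
  have hLHS : tropAdj A i j = ∑ k, A (i.succAbove k) (j.succAbove (σ k)) := by
    simpa [tropAdj, tropMinor, tropDet, Matrix.submatrix] using hσeq
  linarith [hii i, hii j]
end

section
/- Let a1, a2, a3, a4, a5, a6 be real numbers (the coefficients of a tropical conic a1⊙x² ⊕ a2⊙y² ⊕ a3 ⊕ a4⊙x⊙y ⊕ a5⊙x ⊕ a6⊙y), and define the dual conic coefficients b1 = max(2a6, a2 + a3), b2 = max(2a5, a1 + a3), b3 = max(2a4, a1 + a2), b4 = max(a4 + a3, a5 + a6), b5 = max(a2 + a5, a4 + a6), b6 = max(a1 + a6, a4 + a5). If 2a4 < a1 + a2, 2a5 < a1 + a3 and 2a6 < a2 + a3 (the induced subdivision of the primal Newton triangle is maximal in nodes), then 2b4 <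 b1 + b2, 2b5 < b1 + b3 and 2b6 < b2 + b3 (the dual subdivision is also maximal in nodes). -/
/-- If the induced subdivision of the Newton triangle of the tropical conic with
coefficients `a1, ..., a6` is maximal in nodes, then the dual subdivision,
determined by the dual coefficients `b1, ..., b6`, is also maximal in nodes. -/
theorem conic_maximal_in_nodes_dual (a1 a2 a3 a4 a5 a6 : ℝ)
    (b1 b2 b3 b4 b5 b6 : ℝ)
    (hb1 : b1 = max (2 * a6) (a2 + a3))
    (hb2 : b2 = max (2 * a5) (a1 + a3))
    (hb3 : b3 = max (2 * a4) (a1 + a2))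
    (hb4 : b4 = max (a4 + a3) (a5 + a6))
    (hb5 : b5 = max (a2 + a5) (a4 + a6))
    (hb6 : b6 = max (a1 + a6) (a4 + a5))
    (h4 : 2 * a4 < a1 + a2) (h5 : 2 * a5 < a1 + a3) (h6 : 2 * a6 < a2 + a3) :
    2 * b4 < b1 + b2 ∧ 2 * b5 < b1 + b3 ∧ 2 * b6 < b2 + b3 := by
  subst hb1 hb2 hb3 hb4 hb5 hb6
  refine ⟨?_, ?_, ?_⟩ <;>
  · rcases max_cases (a4 + a3) (a5 + a6) with ⟨e4, _⟩ | ⟨e4, _⟩ <;>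
    rcases max_cases (a2 + a5) (a4 + a6) with ⟨e5, _⟩ | ⟨e5, _⟩ <;>
    rcases max_cases (a1 + a6) (a4 + a5) with ⟨e6, _⟩ | ⟨e6, _⟩ <;>
    simp only [e4, e5, e6] <;>
    · have := le_max_right (2 * a6) (a2 + a3)
      have := le_max_right (2 * a5) (a1 + a3)
      have := le_max_right (2 * a4) (a1 + a2)
      linarith
end

section
/- Let a1, a2, a3, a4, a5, a6 be real numbers (the coefficients of a tropical conic a1⊙x² ⊕ a2⊙y² ⊕ a3 ⊕ a4⊙x⊙y ⊕ a5⊙x ⊕ a6⊙y), and define the dual conic coefficients b1 = max(2a6, a2 + a3), b2 = max(2a5, a1 + a3), b3 = max(2a4, a1 + a2), b4 = max(a4 + a3, a5 + a6), b5 = max(a2 + a5, a4 + a6), b6 = max(a1 + a6, a4 + a5). If 2a4 > a1 + a2, 2a5 > a1 + a3 and 2a6 > a2 + a3 (the induced subdivision of the primal Newton triangle is minimal in nodes), then 2b4 ≥ b1 + b2, 2b5 ≥ b1 + b3 and 2b6 ≥ b2 + b3 (so none of the midpoint nodes is a vertex of the dual subdivision, which is therefore also minimal in nodes). -/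
/-- If the induced subdivision of the Newton triangle of the tropical conic with
coefficients `a1, ..., a6` is minimal in nodes, then the dual subdivision,
determined by the dual coefficients `b1, ..., b6`, is also minimal in nodes. -/
theorem conic_minimal_in_nodes_dual (a1 a2 a3 a4 a5 a6 : ℝ)
    (b1 b2 b3 b4 b5 b6 : ℝ)
    (hb1 : b1 = max (2 * a6) (a2 + a3))
    (hb2 : b2 = max (2 * a5) (a1 + a3))
    (hb3 : b3 = max (2 * a4) (a1 + a2))
    (hb4 : b4 = max (a4 + a3) (a5 + a6))
    (hb5 : b5 = max (a2 + a5) (a4 + a6))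
    (hb6 : b6 = max (a1 + a6) (a4 + a5))
    (h4 : 2 * a4 > a1 + a2) (h5 : 2 * a5 > a1 + a3) (h6 : 2 * a6 > a2 + a3) :
    2 * b4 ≥ b1 + b2 ∧ 2 * b5 ≥ b1 + b3 ∧ 2 * b6 ≥ b2 + b3 := by
  have e1 : b1 = 2 * a6 := by rw [hb1, max_eq_left h6.le]
  have e2 : b2 = 2 * a5 := by rw [hb2, max_eq_left h5.le]
  have e3 : b3 = 2 * a4 := by rw [hb3, max_eq_left h4.le]
  refine ⟨?_, ?_, ?_⟩
  · have := le_max_right (a4 + a3) (a5 + a6)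
    rw [← hb4] at this; rw [e1, e2]; linarith
  · have := le_max_right (a2 + a5) (a4 + a6)
    rw [← hb5] at this; rw [e1, e3]; linarith
  · have := le_max_right (a1 + a6) (a4 + a5)
    rw [← hb6] at this; rw [e2, e3]; linarith
end

section
/- Let m ≥ 2 and let A = (a_{i,j}) be an m×m real symmetric matrix. Let E = (ε_{i,j}) be its distortion matrix, i.e. ε_{i,j} = a_{i,j} − (a_{i,i} + a_{j,j})/2. For i ≠ j set G_{i,j} = (a_{i,i} + a_{j,j})/2 + ∑_{l ≠ i,j} a_{l,l}, and set G_{i,i} = ∑_{l ≠ i} a_{l,l}. Then for all indices i, j: tropMinor(A, i, j) = G_{i,j} + tropMinor(E, i, j). -/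
lemma sup'_const_add {α : Type*} [Fintype α] [Nonempty α] (c : ℝ) (f : α → ℝ) :
    (Finset.univ.sup' Finset.univ_nonempty fun x => c + f x)
      = c + Finset.univ.sup' Finset.univ_nonempty f := by
  apply le_antisymm
  · apply Finset.sup'_le
    intro x _
    exact add_le_add_right (Finset.le_sup' f (Finset.mem_univ x)) c
  · obtain ⟨x, -, hx⟩ := Finset.exists_mem_eq_sup' (Finset.univ_nonempty (α := α)) f
    rw [hx]
    exact Finset.le_sup' (fun y => c + f y) (Finset.mem_univ x)

/-- Decomposition of the tropical minors of a symmetric matrix `A` into a "main"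
part `G i j` and the tropical minor of its distortion matrix `E`:
`tropMinor A i j = G i j + tropMinor E i j` for all `i, j`. -/
theorem tropMinor_eq_G_add_distortionMinor {m : ℕ} (hm : 1 ≤ m)
    (A E : Matrix (Fin (m + 1)) (Fin (m + 1)) ℝ) (hsym : A.IsSymm)
    (hE : ∀ i j, E i j = A i j - (A i i + A j j) / 2)
    (G : Fin (m + 1) → Fin (m + 1) → ℝ)
    (hGoff : ∀ i j : Fin (m + 1), i ≠ j →
      G i j = (A i i + A j j) / 2 + ∑ l ∈ Finset.univ \ {i, j}, A l l)
    (hGdiag : ∀ i : Fin (m + 1), G i i = ∑ l ∈ Finset.univ \ {i}, A l l) :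
    ∀ i j : Fin (m + 1), tropMinor A i j = G i j + tropMinor E i j := by
  intro i j
  set S : ℝ := ∑ l, A l l with hS
  have hrow : ∀ p : Fin (m + 1), ∑ k, A (p.succAbove k) (p.succAbove k) = S - A p p := by
    intro p
    have := Fin.sum_univ_succAbove (fun l => A l l) p
    rw [hS, this]; ring
  have hG : G i j = ((S - A i i) + (S - A j j)) / 2 := by
    rcases eq_or_ne i j with rfl | hij
    · rw [hGdiag i]
      have : ∑ l ∈ Finset.univ \ {i}, A l l = S - A i i := by
        rw [Finset.sum_sdiff_eq_sub (Finset.subset_univ _), Finset.sum_singleton]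
      rw [this]; ring
    · rw [hGoff i j hij]
      have : ∑ l ∈ Finset.univ \ {i, j}, A l l = S - (A i i + A j j) := by
        rw [Finset.sum_sdiff_eq_sub (Finset.subset_univ _), Finset.sum_pair hij]
      rw [this]; ring
  have key : ∀ σ : Equiv.Perm (Fin m),
      ∑ k, A (i.succAbove k) (j.succAbove (σ k))
        = G i j + ∑ k, E (i.succAbove k) (j.succAbove (σ k)) := by
    intro σ
    have h1 : ∀ k : Fin m, A (i.succAbove k) (j.succAbove (σ k))
        = E (i.succAbove k) (j.succAbove (σ k))
          + A (i.succAbove k) (i.succAbove k) / 2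
          + A (j.succAbove (σ k)) (j.succAbove (σ k)) / 2 := by
      intro k
      rw [hE]; ring
    calc ∑ k, A (i.succAbove k) (j.succAbove (σ k))
        = (∑ k, E (i.succAbove k) (j.succAbove (σ k)))
          + (∑ k, A (i.succAbove k) (i.succAbove k)) / 2
          + (∑ k, A (j.succAbove (σ k)) (j.succAbove (σ k))) / 2 := by
          simp only [h1, Finset.sum_add_distrib, Finset.sum_div]
      _ = G i j + ∑ k, E (i.succAbove k) (j.succAbove (σ k)) := by
          rw [Equiv.sum_comp σ (fun k => A (j.succAbove k) (j.succAbove k)),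
            hrow i, hrow j, hG]
          ring
  have : tropMinor A i j
      = Finset.univ.sup' Finset.univ_nonempty
        (fun σ : Equiv.Perm (Fin m) => G i j
          + ∑ k, E (i.succAbove k) (j.succAbove (σ k))) := by
    unfold tropMinor tropDet
    exact Finset.sup'_congr _ rfl (fun σ _ => key σ)
  rw [this, sup'_const_add]
  rfl
end

section
/- Let m ≥ 3 and let A be an m×m real symmetric matrix whose distortion values satisfy ε_{i,j} < 0 for all i ≠ j. Let A* be the tropical adjoint of A and A** the tropical adjoint of A*. Then the following are equivalent: (i) A is regular in the duality sense, i.e. there exists λ ∈ ℝ with (A**)_{i,j} = λ + a_{i,j} for all i, j; (ii) the distortion values of A** coincide with those of A, i.e. for all i ≠ j, (A**)_{i,j} − ((A**)_{i,i} + (A**)_{j,j})/2 = a_{i,j} − (a_{i,i} + a_{j,j})/2. -/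
lemma tropDet_eq_trace {m : ℕ} (M : Matrix (Fin m) (Fin m) ℝ)
    (h : ∀ k l, M k l ≤ (M k k + M l l) / 2) :
    tropDet M = ∑ k, M k k := by
  apply le_antisymm
  · apply Finset.sup'_le
    intro σ _
    calc ∑ k, M k (σ k) ≤ ∑ k, (M k k + M (σ k) (σ k)) / 2 :=
          Finset.sum_le_sum fun k _ => h k (σ k)
      _ = ((∑ k, M k k) + ∑ k, M (σ k) (σ k)) / 2 := by
          rw [← Finset.sum_add_distrib, ← Finset.sum_div]
      _ = ∑ k, M k k := by rw [Equiv.sum_comp σ (fun k => M k k)]; ring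
  · exact le_of_eq (by simp) |>.trans
      (Finset.le_sup' _ (Finset.mem_univ (1 : Equiv.Perm (Fin m))))

lemma tropMinor_diag {n : ℕ} (M : Matrix (Fin (n + 1)) (Fin (n + 1)) ℝ)
    (h : ∀ k l, M k l ≤ (M k k + M l l) / 2) (i : Fin (n + 1)) :
    tropMinor M i i = (∑ k, M k k) - M i i := by
  have := tropDet_eq_trace (M.submatrix i.succAbove i.succAbove)
    (fun k l => h _ _)
  rw [tropMinor, this]
  have hsum := Fin.sum_univ_succAbove (fun k => M k k) i
  simp only [Matrix.submatrix_apply]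
  linarith

lemma tropMinor_lt {n : ℕ} (M : Matrix (Fin (n + 1)) (Fin (n + 1)) ℝ)
    (h : ∀ k l, M k l ≤ (M k k + M l l) / 2)
    (hs : ∀ k l, k ≠ l → M k l < (M k k + M l l) / 2)
    {i j : Fin (n + 1)} (hij : i ≠ j) :
    tropMinor M i j <
      (((∑ k, M k k) - M i i) + ((∑ k, M k k) - M j j)) / 2 := by
  rw [tropMinor, tropDet]
  rw [Finset.sup'_lt_iff]
  intro σ _
  simp only [Matrix.submatrix_apply]
  obtain ⟨k₁, hk₁⟩ := Fin.exists_succAbove_eq hij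
  set k₀ := σ⁻¹ k₁ with hk₀
  have hσk₀ : σ k₀ = k₁ := by simp [hk₀]
  have hne : i.succAbove k₀ ≠ j.succAbove (σ k₀) := by
    rw [hσk₀, hk₁]
    exact Fin.succAbove_ne i k₀
  have key : ∑ k, M (i.succAbove k) (j.succAbove (σ k)) <
      ∑ k, (M (i.succAbove k) (i.succAbove k)
        + M (j.succAbove (σ k)) (j.succAbove (σ k))) / 2 := by
    apply Finset.sum_lt_sum
    · intro k _; exact h _ _
    · exact ⟨k₀, Finset.mem_univ _, hs _ _ hne⟩
  have e1 : ∑ k, M (i.succAbove k) (i.succAbove k) = (∑ k, M k k) - M i i := by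
    have := Fin.sum_univ_succAbove (fun k => M k k) i; linarith
  have e2 : ∑ k, M (j.succAbove (σ k)) (j.succAbove (σ k))
      = (∑ k, M k k) - M j j := by
    rw [Equiv.sum_comp σ (fun k => M (j.succAbove k) (j.succAbove k))]
    have := Fin.sum_univ_succAbove (fun k => M k k) j; linarith
  calc ∑ k, M (i.succAbove k) (j.succAbove (σ k))
      < ∑ k, (M (i.succAbove k) (i.succAbove k)
        + M (j.succAbove (σ k)) (j.succAbove (σ k))) / 2 := key
    _ = ((∑ k, M (i.succAbove k) (i.succAbove k))
        + ∑ k, M (j.succAbove (σ k)) (j.succAbove (σ k))) / 2 := by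
          rw [← Finset.sum_add_distrib, ← Finset.sum_div]
    _ = _ := by rw [e1, e2]

/-- Let `A` be an `m × m` (here `m ≥ 3`) real symmetric matrix with all
off-diagonal distortion values negative.  Then `A` is regular in the duality
sense (the double tropical adjoint equals `A` lifted by a constant) if and only
if the distortion values of the double tropical adjoint coincide with those
of `A`. -/
theorem regular_iff_distortion_eq {m : ℕ} (hm : 2 ≤ m)
    (A : Matrix (Fin (m + 1)) (Fin (m + 1)) ℝ) (hsym : A.IsSymm)
    (hneg : ∀ i j : Fin (m + 1), i ≠ j → A i j - (A i i + A j j) / 2 < 0) :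
    (∃ lam : ℝ, ∀ i j : Fin (m + 1), tropAdj (tropAdj A) i j = lam + A i j) ↔
    (∀ i j : Fin (m + 1), i ≠ j →
      tropAdj (tropAdj A) i j -
          (tropAdj (tropAdj A) i i + tropAdj (tropAdj A) j j) / 2 =
        A i j - (A i i + A j j) / 2) := by
  have hA_le : ∀ k l, A k l ≤ (A k k + A l l) / 2 := by
    intro k l
    rcases eq_or_ne k l with rfl | h
    · linarith
    · linarith [hneg k l h]
  have hA_lt : ∀ k l, k ≠ l → A k l < (A k k + A l l) / 2 :=
    fun k l h => by linarith [hneg k l h]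
  have hBdiag : ∀ k, tropAdj A k k = (∑ k, A k k) - A k k :=
    fun k => tropMinor_diag A hA_le k
  have hB_le : ∀ k l, tropAdj A k l ≤ (tropAdj A k k + tropAdj A l l) / 2 := by
    intro k l
    rcases eq_or_ne k l with rfl | h
    · linarith
    · have h1 := tropMinor_lt A hA_le hA_lt h
      have h2 : tropAdj A k l = tropMinor A k l := rfl
      rw [h2, hBdiag, hBdiag]
      linarith
  have hAA : ∀ i, tropAdj (tropAdj A) i i
      = (∑ k, tropAdj A k k) - ((∑ k, A k k) - A i i) := by
    intro i
    have : tropAdj (tropAdj A) i i = tropMinor (tropAdj A) i i := rfl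
    rw [this, tropMinor_diag (tropAdj A) hB_le i, hBdiag]
  constructor
  · rintro ⟨lam, hl⟩ i j hij
    rw [hl, hl, hl]; ring
  · intro h
    refine ⟨(∑ k, tropAdj A k k) - (∑ k, A k k), fun i j => ?_⟩
    rcases eq_or_ne i j with rfl | hij
    · rw [hAA]; ring
    · have h1 := h i j hij
      have h2 := hAA i
      have h3 := hAA j
      linarith
end

section
/- Let m ≥ 3 and let A be an m×m real symmetric matrix whose distortion values satisfy ε_{i,j} < 0 for all i ≠ j. If for all pairs of distinct indices i, j one has ε_{i,j} > (max_{k ≠ i,j} ε_{j,k}) + (max_{h ≠ i,j} ε_{h,i}), then A is regular in the duality sense: there exists λ ∈ ℝ such that (A**)_{i,j} = λ + a_{i,j} for all i, j, where A* is the tropical adjoint of A and A** is the tropical adjoint of A*. -/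
/-- For `m ≥ 3` (here size `m + 1` with `2 ≤ m`), the complement of a pair of
indices is nonempty. -/
lemma compl_pair_nonempty {m : ℕ} (hm : 2 ≤ m) (i j : Fin (m + 1)) :
    (Finset.univ \ {i, j}).Nonempty := by
  rw [Finset.sdiff_nonempty]
  intro hsub
  have h1 : (Finset.univ : Finset (Fin (m + 1))).card ≤ ({i, j} : Finset (Fin (m + 1))).card :=
    Finset.card_le_card hsub
  have h2 : ({i, j} : Finset (Fin (m + 1))).card ≤ 2 :=
    (Finset.card_insert_le _ _).trans (by simp)
  rw [Finset.card_univ, Fintype.card_fin] at h1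
  omega

/-- The key formula for the tropical adjoint under the hypotheses. -/
lemma tropAdj_formula {m : ℕ} (hm : 2 ≤ m)
    (A : Matrix (Fin (m + 1)) (Fin (m + 1)) ℝ) (hsym : A.IsSymm)
    (hneg : ∀ i j : Fin (m + 1), i ≠ j → A i j - (A i i + A j j) / 2 < 0)
    (hcond : ∀ i j : Fin (m + 1), i ≠ j →
      ((Finset.univ \ {i, j}).sup' (compl_pair_nonempty hm i j)
          fun k => A j k - (A j j + A k k) / 2) +
        ((Finset.univ \ {i, j}).sup' (compl_pair_nonempty hm i j)
          fun h => A h i - (A h h + A i i) / 2) <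
        A i j - (A i i + A j j) / 2) (i j : Fin (m + 1)) :
    tropAdj A i j = (∑ k, A k k) - A i i - A j j + A i j := by
  have heps : ∀ x y : Fin (m + 1), A x y ≤ (A x x + A y y) / 2 := by
    intro x y
    rcases eq_or_ne x y with rfl | hxy
    · apply le_of_eq; ring
    · linarith [hneg x y hxy]
  rcases eq_or_ne i j with rfl | hij
  · -- diagonal case
    show tropDet _ = _
    rw [tropDet_eq_trace (A.submatrix i.succAbove i.succAbove)
        (fun k l => heps _ _)]
    have := Fin.sum_univ_succAbove (fun x => A x x) i
    simp only [Matrix.submatrix_apply]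
    linarith
  · -- off-diagonal case
    show tropDet _ = _
    apply le_antisymm
    · apply Finset.sup'_le
      intro σ _
      simp only [Matrix.submatrix_apply]
      -- bound the distortion part
      obtain ⟨f, hf⟩ : ∃ f : Fin m → ℝ, f = fun k =>
          A (i.succAbove k) (j.succAbove (σ k)) -
            (A (i.succAbove k) (i.succAbove k) +
              A (j.succAbove (σ k)) (j.succAbove (σ k))) / 2 := ⟨_, rfl⟩
      have hfnonpos : ∀ k, f k ≤ 0 := fun k => by
        have := heps (i.succAbove k) (j.succAbove (σ k)); simp only [hf]; linarith
      obtain ⟨k0, hk0⟩ := Fin.exists_succAbove_eq (Ne.symm hij)   -- i.succAbove k0 = j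
      obtain ⟨l0, hl0⟩ := Fin.exists_succAbove_eq hij             -- j.succAbove l0 = i
      have hfsum : (∑ k, f k) ≤ A i j - (A i i + A j j) / 2 := by
        rcases eq_or_ne (σ.symm l0) k0 with hk | hk
        · -- direct edge j → i
          have hσk0 : σ k0 = l0 := by rw [← hk, Equiv.apply_symm_apply]
          have hfk0 : f k0 = A i j - (A i i + A j j) / 2 := by
            simp only [hf, hk0, hσk0, hl0, hsym.apply i j]; ring
          have h1 : ∑ k ∈ Finset.univ.erase k0, f k ≤ 0 :=
            Finset.sum_nonpos fun k _ => hfnonpos k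
          have h2 : ∑ k ∈ Finset.univ.erase k0, f k + f k0 = ∑ k, f k :=
            Finset.sum_erase_add _ _ (Finset.mem_univ k0)
          linarith
        · -- path of length ≥ 2
          have hk' : k0 ≠ σ.symm l0 := Ne.symm hk
          have hsub : ({k0, σ.symm l0} : Finset (Fin m)) ⊆ Finset.univ :=
            Finset.subset_univ _
          have hsplit := Finset.sum_sdiff (f := f) hsub
          have h1 : ∑ k ∈ Finset.univ \ {k0, σ.symm l0}, f k ≤ 0 :=
            Finset.sum_nonpos fun k _ => hfnonpos k
          have hpair : ∑ k ∈ ({k0, σ.symm l0} : Finset (Fin m)), f k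
              = f k0 + f (σ.symm l0) := Finset.sum_pair hk'
          -- f k0 ≤ sup1
          have hc0 : j.succAbove (σ k0) ∈ Finset.univ \ ({i, j} : Finset (Fin (m+1))) := by
            simp only [Finset.mem_sdiff, Finset.mem_univ, Finset.mem_insert,
              Finset.mem_singleton, true_and]
            push_neg
            constructor
            · intro hcontra
              rw [← hl0] at hcontra
              have : σ k0 = l0 := Fin.succAbove_right_injective hcontra
              exact hk' (by rw [← this, Equiv.symm_apply_apply])
            · exact Fin.succAbove_ne j (σ k0)
          have hb0 : f k0 ≤ (Finset.univ \ {i, j}).sup' (compl_pair_nonempty hm i j)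
              (fun k => A j k - (A j j + A k k) / 2) := by
            have := Finset.le_sup' (fun k => A j k - (A j j + A k k) / 2) hc0
            simp only [hf, hk0]
            exact this
          -- f (σ.symm l0) ≤ sup2
          have hc1 : i.succAbove (σ.symm l0) ∈ Finset.univ \ ({i, j} : Finset (Fin (m+1))) := by
            simp only [Finset.mem_sdiff, Finset.mem_univ, Finset.mem_insert,
              Finset.mem_singleton, true_and]
            push_neg
            refine ⟨Fin.succAbove_ne i (σ.symm l0), ?_⟩
            intro hcontra
            rw [← hk0] at hcontra
            exact hk (Fin.succAbove_right_injective hcontra)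
          have hb1 : f (σ.symm l0) ≤ (Finset.univ \ {i, j}).sup' (compl_pair_nonempty hm i j)
              (fun h => A h i - (A h h + A i i) / 2) := by
            have := Finset.le_sup' (fun h => A h i - (A h h + A i i) / 2) hc1
            simp only [hf, Equiv.apply_symm_apply, hl0]
            exact this
          have := hcond i j hij
          linarith
      -- assemble sums of diagonal halves
      have hrow : ∑ k : Fin m, A (i.succAbove k) (i.succAbove k)
          = (∑ x, A x x) - A i i := by
        have := Fin.sum_univ_succAbove (fun x => A x x) i; linarith
      have hcol : ∑ k : Fin m, A (j.succAbove (σ k)) (j.succAbove (σ k))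
          = (∑ x, A x x) - A j j := by
        have h1 : ∑ k : Fin m, A (j.succAbove (σ k)) (j.succAbove (σ k))
            = ∑ l : Fin m, A (j.succAbove l) (j.succAbove l) :=
          Equiv.sum_comp σ (fun l => A (j.succAbove l) (j.succAbove l))
        have := Fin.sum_univ_succAbove (fun x => A x x) j; linarith
      have hdecomp : ∑ k, A (i.succAbove k) (j.succAbove (σ k))
          = (∑ k, f k) + ((∑ k : Fin m, A (i.succAbove k) (i.succAbove k))
              + ∑ k : Fin m, A (j.succAbove (σ k)) (j.succAbove (σ k))) / 2 := by
        rw [← Finset.sum_add_distrib, Finset.sum_div, ← Finset.sum_add_distrib]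
        apply Finset.sum_congr rfl
        intro k _
        simp only [hf]; ring
      rw [hdecomp, hrow, hcol]
      linarith
    · -- lower bound: exhibit the permutation
      have hne : ∀ k : Fin m, Equiv.swap i j (i.succAbove k) ≠ j := by
        intro k hcontra
        have : i.succAbove k = i := by
          have := (Equiv.swap i j).injective (a₁ := i.succAbove k) (a₂ := i)
          apply this
          rw [hcontra, Equiv.swap_apply_left]
        exact Fin.succAbove_ne i k this
      have hex : ∀ k : Fin m, ∃ l, j.succAbove l = Equiv.swap i j (i.succAbove k) :=
        fun k => Fin.exists_succAbove_eq (hne k)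
      choose t ht using hex
      have htinj : Function.Injective t := by
        intro a b hab
        have : j.succAbove (t a) = j.succAbove (t b) := by rw [hab]
        rw [ht a, ht b] at this
        exact Fin.succAbove_right_injective
          ((Equiv.swap i j).injective this)
      let τ : Equiv.Perm (Fin m) := Equiv.ofBijective t (Finite.injective_iff_bijective.mp htinj)
      have hτ : ∀ k, τ k = t k := fun k => rfl
      refine le_trans (le_of_eq ?_) (Finset.le_sup' _ (Finset.mem_univ τ))
      simp only [Matrix.submatrix_apply, hτ]
      have hgval : ∀ k : Fin m, A (i.succAbove k) (j.succAbove (t k))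
          = A (i.succAbove k) (Equiv.swap i j (i.succAbove k)) := fun k => by rw [ht k]
      rw [show (∑ k, A (i.succAbove k) (j.succAbove (t k)))
          = ∑ k, A (i.succAbove k) (Equiv.swap i j (i.succAbove k)) from
          Finset.sum_congr rfl fun k _ => hgval k]
      obtain ⟨g, hg⟩ : ∃ g : Fin (m + 1) → ℝ,
          g = fun x => A x (Equiv.swap i j x) := ⟨_, rfl⟩
      have h1 : ∑ x, g x = g i + ∑ k, g (i.succAbove k) :=
        Fin.sum_univ_succAbove g i
      have h2 : ∑ x, (g x - A x x) = ∑ x ∈ ({i, j} : Finset (Fin (m+1))), (g x - A x x) := by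
        symm
        apply Finset.sum_subset (Finset.subset_univ _)
        intro x _ hx
        simp only [Finset.mem_insert, Finset.mem_singleton] at hx
        push_neg at hx
        simp only [hg, Equiv.swap_apply_of_ne_of_ne hx.1 hx.2, sub_self]
      have h3 : ∑ x ∈ ({i, j} : Finset (Fin (m+1))), (g x - A x x)
          = (g i - A i i) + (g j - A j j) := Finset.sum_pair hij
      have h4 : ∑ x, (g x - A x x) = (∑ x, g x) - ∑ x, A x x :=
        Finset.sum_sub_distrib _ _
      have hgi : g i = A i j := by simp only [hg, Equiv.swap_apply_left]
      have hgj : g j = A j i := by simp only [hg, Equiv.swap_apply_right]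
      have hji : A j i = A i j := hsym.apply i j
      have h5 : ∑ k : Fin m, g (i.succAbove k)
          = ∑ k : Fin m, A (i.succAbove k) (Equiv.swap i j (i.succAbove k)) := by
        simp only [hg]
      linarith

/-- Sufficient condition for regularity in the duality sense: if all off-diagonal
distortion values `ε i j` of the symmetric matrix `A` are negative and satisfy
`ε i j > (max_{k ≠ i,j} ε j k) + (max_{h ≠ i,j} ε h i)`, then the double tropical
adjoint of `A` is `A` lifted by a constant. -/
theorem regular_of_distortion_cond {m : ℕ} (hm : 2 ≤ m)
    (A : Matrix (Fin (m + 1)) (Fin (m + 1)) ℝ) (hsym : A.IsSymm)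
    (hneg : ∀ i j : Fin (m + 1), i ≠ j → A i j - (A i i + A j j) / 2 < 0)
    (hcond : ∀ i j : Fin (m + 1), i ≠ j →
      ((Finset.univ \ {i, j}).sup' (compl_pair_nonempty hm i j)
          fun k => A j k - (A j j + A k k) / 2) +
        ((Finset.univ \ {i, j}).sup' (compl_pair_nonempty hm i j)
          fun h => A h i - (A h h + A i i) / 2) <
        A i j - (A i i + A j j) / 2) :
    ∃ lam : ℝ, ∀ i j : Fin (m + 1), tropAdj (tropAdj A) i j = lam + A i j := by
  set T : ℝ := ∑ k, A k k with hT
  have key : ∀ i j, tropAdj A i j = T - A i i - A j j + A i j :=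
    tropAdj_formula hm A hsym hneg hcond
  set B := tropAdj A with hBdef
  -- distortion values of B equal those of A
  have hBeps : ∀ i j, B i j - (B i i + B j j) / 2 = A i j - (A i i + A j j) / 2 := by
    intro i j
    rw [key i j, key i i, key j j]; ring
  have hBsym : B.IsSymm := by
    apply Matrix.IsSymm.ext
    intro i j
    rw [key i j, key j i, hsym.apply i j]; ring
  have hBneg : ∀ i j : Fin (m + 1), i ≠ j → B i j - (B i i + B j j) / 2 < 0 := by
    intro i j hij; rw [hBeps]; exact hneg i j hij
  have hBcond : ∀ i j : Fin (m + 1), i ≠ j →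
      ((Finset.univ \ {i, j}).sup' (compl_pair_nonempty hm i j)
          fun k => B j k - (B j j + B k k) / 2) +
        ((Finset.univ \ {i, j}).sup' (compl_pair_nonempty hm i j)
          fun h => B h i - (B h h + B i i) / 2) <
        B i j - (B i i + B j j) / 2 := by
    intro i j hij
    rw [Finset.sup'_congr (compl_pair_nonempty hm i j) rfl
        (fun k _ => hBeps j k),
      Finset.sup'_congr (compl_pair_nonempty hm i j) rfl
        (fun h _ => hBeps h i), hBeps]
    exact hcond i j hij
  have key2 : ∀ i j, tropAdj B i j = (∑ k, B k k) - B i i - B j j + B i j :=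
    tropAdj_formula hm B hBsym hBneg hBcond
  have hTB : (∑ k, B k k) = (m + 1 : ℝ) * T - T := by
    have h1 : ∀ k, B k k = T - A k k := fun k => by rw [key k k]; ring
    rw [Finset.sum_congr rfl (fun k _ => h1 k), Finset.sum_sub_distrib,
      Finset.sum_const, Finset.card_univ, Fintype.card_fin, ← hT]
    ring
  refine ⟨(m : ℝ) * T - T, fun i j => ?_⟩
  rw [key2 i j, hTB, key i j, key i i, key j j]
  ring
end

section
/- Let A be a 3×3 real symmetric matrix whose distortion values satisfy ε_{i,j} < 0 for all i ≠ j. Then A is regular in the duality sense (there exists λ ∈ ℝ with (A**)_{i,j} = λ + a_{i,j} for all i, j) if and only if for every pair of distinct indices i, j, with k the remaining third index, ε_{i,j} ≥ ε_{j,k} + ε_{k,i}. -/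
lemma tropDet_fin_two (M : Matrix (Fin 2) (Fin 2) ℝ) :
    tropDet M = max (M 0 0 + M 1 1) (M 0 1 + M 1 0) := by
  unfold tropDet
  apply le_antisymm
  · apply Finset.sup'_le
    intro σ _
    have hall : ∀ τ : Equiv.Perm (Fin 2), τ = 1 ∨ τ = Equiv.swap 0 1 := by decide
    rcases hall σ with h | h <;> subst h <;> simp [Fin.sum_univ_two]
  · apply max_le
    · exact le_trans (by simp [Fin.sum_univ_two]) (Finset.le_sup'
        (f := fun σ : Equiv.Perm (Fin 2) => ∑ k, M k (σ k)) (Finset.mem_univ 1))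
    · exact le_trans (by simp [Fin.sum_univ_two]) (Finset.le_sup'
        (f := fun σ : Equiv.Perm (Fin 2) => ∑ k, M k (σ k)) (Finset.mem_univ (Equiv.swap 0 1)))

lemma tropAdj_three (A : Matrix (Fin 3) (Fin 3) ℝ) (i j : Fin 3) :
    tropAdj A i j = max (A (i.succAbove 0) (j.succAbove 0) + A (i.succAbove 1) (j.succAbove 1))
      (A (i.succAbove 0) (j.succAbove 1) + A (i.succAbove 1) (j.succAbove 0)) := by
  show tropMinor A i j = _
  unfold tropMinor
  rw [tropDet_fin_two]
  simp [Matrix.submatrix_apply]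

set_option maxHeartbeats 3200000 in
/-- A `3 × 3` real symmetric matrix with negative off-diagonal distortion values
is regular in the duality sense if and only if for every pair of distinct indices
`i, j` (with `k` the remaining index) `ε i j ≥ ε j k + ε k i`. -/
theorem regular_iff_three_by_three (A : Matrix (Fin 3) (Fin 3) ℝ) (hsym : A.IsSymm)
    (hneg : ∀ i j : Fin 3, i ≠ j → A i j - (A i i + A j j) / 2 < 0) :
    (∃ lam : ℝ, ∀ i j : Fin 3, tropAdj (tropAdj A) i j = lam + A i j) ↔
    (∀ i j k : Fin 3, i ≠ j → k ≠ i → k ≠ j →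
      (A j k - (A j j + A k k) / 2) + (A k i - (A k k + A i i) / 2) ≤
        A i j - (A i i + A j j) / 2) := by
  have sy01 : A 1 0 = A 0 1 := hsym.apply 0 1
  have sy02 : A 2 0 = A 0 2 := hsym.apply 0 2
  have sy12 : A 2 1 = A 1 2 := hsym.apply 1 2
  have hd : A 0 1 - (A 0 0 + A 1 1) / 2 < 0 := hneg 0 1 (by decide)
  have he : A 0 2 - (A 0 0 + A 2 2) / 2 < 0 := hneg 0 2 (by decide)
  have hf : A 1 2 - (A 1 1 + A 2 2) / 2 < 0 := hneg 1 2 (by decide)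
  have hB00 : tropAdj A 0 0 = max (A 1 1 + A 2 2) (A 1 2 + A 2 1) := by
    rw [tropAdj_three]; norm_num [Fin.succAbove, Fin.lt_def]
  have hB01 : tropAdj A 0 1 = max (A 1 0 + A 2 2) (A 1 2 + A 2 0) := by
    rw [tropAdj_three]; norm_num [Fin.succAbove, Fin.lt_def]
  have hB02 : tropAdj A 0 2 = max (A 1 0 + A 2 1) (A 1 1 + A 2 0) := by
    rw [tropAdj_three]; norm_num [Fin.succAbove, Fin.lt_def]
  have hB10 : tropAdj A 1 0 = max (A 0 1 + A 2 2) (A 0 2 + A 2 1) := by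
    rw [tropAdj_three]; norm_num [Fin.succAbove, Fin.lt_def]
  have hB11 : tropAdj A 1 1 = max (A 0 0 + A 2 2) (A 0 2 + A 2 0) := by
    rw [tropAdj_three]; norm_num [Fin.succAbove, Fin.lt_def]
  have hB12 : tropAdj A 1 2 = max (A 0 0 + A 2 1) (A 0 1 + A 2 0) := by
    rw [tropAdj_three]; norm_num [Fin.succAbove, Fin.lt_def]
  have hB20 : tropAdj A 2 0 = max (A 0 1 + A 1 2) (A 0 2 + A 1 1) := by
    rw [tropAdj_three]; norm_num [Fin.succAbove, Fin.lt_def]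
  have hB21 : tropAdj A 2 1 = max (A 0 0 + A 1 2) (A 0 2 + A 1 0) := by
    rw [tropAdj_three]; norm_num [Fin.succAbove, Fin.lt_def]
  have hB22 : tropAdj A 2 2 = max (A 0 0 + A 1 1) (A 0 1 + A 1 0) := by
    rw [tropAdj_three]; norm_num [Fin.succAbove, Fin.lt_def]
  -- diagonal entries of tropAdj A simplify
  have b00 : tropAdj A 0 0 = A 1 1 + A 2 2 := by rw [hB00, max_eq_left (by linarith)]
  have b11 : tropAdj A 1 1 = A 0 0 + A 2 2 := by rw [hB11, max_eq_left (by linarith)]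
  have b22 : tropAdj A 2 2 = A 0 0 + A 1 1 := by rw [hB22, max_eq_left (by linarith)]
  have hC00 : tropAdj (tropAdj A) 0 0
      = max (tropAdj A 1 1 + tropAdj A 2 2) (tropAdj A 1 2 + tropAdj A 2 1) := by
    rw [tropAdj_three]; norm_num [Fin.succAbove, Fin.lt_def]
  have hC01 : tropAdj (tropAdj A) 0 1
      = max (tropAdj A 1 0 + tropAdj A 2 2) (tropAdj A 1 2 + tropAdj A 2 0) := by
    rw [tropAdj_three]; norm_num [Fin.succAbove, Fin.lt_def]
  have hC02 : tropAdj (tropAdj A) 0 2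
      = max (tropAdj A 1 0 + tropAdj A 2 1) (tropAdj A 1 1 + tropAdj A 2 0) := by
    rw [tropAdj_three]; norm_num [Fin.succAbove, Fin.lt_def]
  have hC10 : tropAdj (tropAdj A) 1 0
      = max (tropAdj A 0 1 + tropAdj A 2 2) (tropAdj A 0 2 + tropAdj A 2 1) := by
    rw [tropAdj_three]; norm_num [Fin.succAbove, Fin.lt_def]
  have hC11 : tropAdj (tropAdj A) 1 1
      = max (tropAdj A 0 0 + tropAdj A 2 2) (tropAdj A 0 2 + tropAdj A 2 0) := by
    rw [tropAdj_three]; norm_num [Fin.succAbove, Fin.lt_def]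
  have hC12 : tropAdj (tropAdj A) 1 2
      = max (tropAdj A 0 0 + tropAdj A 2 1) (tropAdj A 0 1 + tropAdj A 2 0) := by
    rw [tropAdj_three]; norm_num [Fin.succAbove, Fin.lt_def]
  have hC20 : tropAdj (tropAdj A) 2 0
      = max (tropAdj A 0 1 + tropAdj A 1 2) (tropAdj A 0 2 + tropAdj A 1 1) := by
    rw [tropAdj_three]; norm_num [Fin.succAbove, Fin.lt_def]
  have hC21 : tropAdj (tropAdj A) 2 1
      = max (tropAdj A 0 0 + tropAdj A 1 2) (tropAdj A 0 2 + tropAdj A 1 0) := by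
    rw [tropAdj_three]; norm_num [Fin.succAbove, Fin.lt_def]
  have hC22 : tropAdj (tropAdj A) 2 2
      = max (tropAdj A 0 0 + tropAdj A 1 1) (tropAdj A 0 1 + tropAdj A 1 0) := by
    rw [tropAdj_three]; norm_num [Fin.succAbove, Fin.lt_def]
  constructor
  · rintro ⟨l, hl⟩
    -- determine l
    have h12le : tropAdj A 1 2 ≤ (2 * A 0 0 + A 1 1 + A 2 2) / 2 := by
      rw [hB12]; apply max_le <;> linarith
    have h21le : tropAdj A 2 1 ≤ (2 * A 0 0 + A 1 1 + A 2 2) / 2 := by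
      rw [hB21]; apply max_le <;> linarith
    have hC00' : tropAdj (tropAdj A) 0 0 = A 0 0 + A 1 1 + A 2 2 + A 0 0 := by
      rw [hC00, b11, b22, max_eq_left (by linarith)]; ring
    have hlam : l = A 0 0 + A 1 1 + A 2 2 := by
      have := hl 0 0; rw [hC00'] at this; linarith
    -- key inequalities
    have K1 : A 0 2 + A 1 2 ≤ A 2 2 + A 0 1 := by
      have h1 := hl 0 1
      rw [hC01] at h1
      have h2 : tropAdj A 1 0 + tropAdj A 2 2 ≤ l + A 0 1 := h1 ▸ le_max_left _ _
      have h3 : A 0 2 + A 2 1 ≤ tropAdj A 1 0 := hB10 ▸ le_max_right _ _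
      rw [b22] at h2; rw [hlam] at h2; linarith
    have K2 : A 0 1 + A 1 2 ≤ A 1 1 + A 0 2 := by
      have h1 := hl 0 2
      rw [hC02] at h1
      have h2 : tropAdj A 1 1 + tropAdj A 2 0 ≤ l + A 0 2 := h1 ▸ le_max_right _ _
      have h3 : A 0 1 + A 1 2 ≤ tropAdj A 2 0 := hB20 ▸ le_max_left _ _
      rw [b11] at h2; rw [hlam] at h2; linarith
    have K3 : A 0 1 + A 0 2 ≤ A 0 0 + A 1 2 := by
      have h1 := hl 1 2
      rw [hC12] at h1
      have h2 : tropAdj A 0 0 + tropAdj A 2 1 ≤ l + A 1 2 := h1 ▸ le_max_left _ _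
      have h3 : A 0 2 + A 1 0 ≤ tropAdj A 2 1 := hB21 ▸ le_max_right _ _
      rw [b00] at h2; rw [hlam] at h2; linarith
    clear hl hC00 hC01 hC02 hC10 hC11 hC12 hC20 hC21 hC22 hC00' h12le h21le hlam
    clear hB00 hB01 hB02 hB10 hB11 hB12 hB20 hB21 hB22 b00 b11 b22
    intro i j k hij hki hkj
    fin_cases i <;> fin_cases j <;> fin_cases k <;>
      simp_all <;> linarith
  · intro h
    have K1 : A 0 2 + A 1 2 ≤ A 2 2 + A 0 1 := by
      have := h 0 1 2 (by decide) (by decide) (by decide); linarith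
    have K2 : A 0 1 + A 1 2 ≤ A 1 1 + A 0 2 := by
      have := h 0 2 1 (by decide) (by decide) (by decide); linarith
    have K3 : A 0 1 + A 0 2 ≤ A 0 0 + A 1 2 := by
      have := h 1 2 0 (by decide) (by decide) (by decide); linarith
    have b01 : tropAdj A 0 1 = A 0 1 + A 2 2 := by
      rw [hB01, max_eq_left (by linarith)]; linarith
    have b10 : tropAdj A 1 0 = A 0 1 + A 2 2 := by
      rw [hB10, max_eq_left (by linarith)]
    have b02 : tropAdj A 0 2 = A 1 1 + A 0 2 := by
      rw [hB02, max_eq_right (by linarith)]; linarith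
    have b20 : tropAdj A 2 0 = A 1 1 + A 0 2 := by
      rw [hB20, max_eq_right (by linarith)]; linarith
    have b12 : tropAdj A 1 2 = A 0 0 + A 1 2 := by
      rw [hB12, max_eq_left (by linarith)]; linarith
    have b21 : tropAdj A 2 1 = A 0 0 + A 1 2 := by
      rw [hB21, max_eq_left (by linarith)]
    have g00 : tropAdj (tropAdj A) 0 0 = (A 0 0 + A 1 1 + A 2 2) + A 0 0 := by
      rw [hC00, b11, b22, b12, b21, max_def]; split_ifs <;> linarith
    have g01 : tropAdj (tropAdj A) 0 1 = (A 0 0 + A 1 1 + A 2 2) + A 0 1 := by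
      rw [hC01, b10, b22, b12, b20, max_def]; split_ifs <;> linarith
    have g02 : tropAdj (tropAdj A) 0 2 = (A 0 0 + A 1 1 + A 2 2) + A 0 2 := by
      rw [hC02, b10, b21, b11, b20, max_def]; split_ifs <;> linarith
    have g10 : tropAdj (tropAdj A) 1 0 = (A 0 0 + A 1 1 + A 2 2) + A 1 0 := by
      rw [hC10, b01, b22, b02, b21, max_def]; split_ifs <;> linarith
    have g11 : tropAdj (tropAdj A) 1 1 = (A 0 0 + A 1 1 + A 2 2) + A 1 1 := by
      rw [hC11, b00, b22, b02, b20, max_def]; split_ifs <;> linarith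
    have g12 : tropAdj (tropAdj A) 1 2 = (A 0 0 + A 1 1 + A 2 2) + A 1 2 := by
      rw [hC12, b00, b21, b01, b20, max_def]; split_ifs <;> linarith
    have g20 : tropAdj (tropAdj A) 2 0 = (A 0 0 + A 1 1 + A 2 2) + A 2 0 := by
      rw [hC20, b01, b12, b02, b11, max_def]; split_ifs <;> linarith
    have g21 : tropAdj (tropAdj A) 2 1 = (A 0 0 + A 1 1 + A 2 2) + A 2 1 := by
      rw [hC21, b00, b12, b02, b10, max_def]; split_ifs <;> linarith
    have g22 : tropAdj (tropAdj A) 2 2 = (A 0 0 + A 1 1 + A 2 2) + A 2 2 := by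
      rw [hC22, b00, b11, b01, b10, max_def]; split_ifs <;> linarith
    refine ⟨A 0 0 + A 1 1 + A 2 2, fun i j => ?_⟩
    fin_cases i <;> fin_cases j
    exacts [g00, g01, g02, g10, g11, g12, g20, g21, g22]
end

section
/- Let m ≥ 2 and let A be an m×m real symmetric matrix whose distortion values satisfy ε_{i,j} < 0 for all i ≠ j, and let E = (ε_{i,j}) be the distortion matrix of A. Then for all i ≠ j, the distortion values of the tropical adjoint A* are given by the tropical minors of E: tropMinor(A, i, j) − (tropMinor(A, i, i) + tropMinor(A, j, j))/2 = tropMinor(E, i, j). -/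
lemma sup'_sub_const {α : Type*} (s : Finset α) (hs : s.Nonempty) (f : α → ℝ) (c : ℝ) :
    s.sup' hs (fun a => f a - c) = s.sup' hs f - c := by
  apply le_antisymm
  · apply Finset.sup'_le
    intro a ha
    have := Finset.le_sup' f ha
    linarith
  · rw [sub_le_iff_le_add]
    apply Finset.sup'_le
    intro a ha
    have := Finset.le_sup' (fun a => f a - c) ha
    linarith

lemma tropMinor_diag_s11 {m : ℕ}
    (A : Matrix (Fin (m + 1)) (Fin (m + 1)) ℝ)
    (hneg : ∀ i j : Fin (m + 1), i ≠ j → A i j - (A i i + A j j) / 2 < 0)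
    (i : Fin (m + 1)) :
    tropMinor A i i = ∑ k, A (i.succAbove k) (i.succAbove k) := by
  unfold tropMinor tropDet
  apply le_antisymm
  · refine Finset.sup'_le _ _ ?_
    intro σ _
    simp only [Matrix.submatrix_apply]
    have h1 : ∀ k ∈ Finset.univ, A (i.succAbove k) (i.succAbove (σ k)) ≤
        (A (i.succAbove k) (i.succAbove k) + A (i.succAbove (σ k)) (i.succAbove (σ k))) / 2 := by
      intro k _
      by_cases h : σ k = k
      · rw [h]; linarith
      · have hne : i.succAbove k ≠ i.succAbove (σ k) := fun he =>
          h ((Fin.succAbove_right_injective (p := i)) he).symm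
        have := hneg _ _ hne
        linarith
    calc ∑ k, A (i.succAbove k) (i.succAbove (σ k))
        ≤ ∑ k, (A (i.succAbove k) (i.succAbove k)
            + A (i.succAbove (σ k)) (i.succAbove (σ k))) / 2 := Finset.sum_le_sum h1
      _ = ∑ k, A (i.succAbove k) (i.succAbove k) := by
          rw [← Finset.sum_div, Finset.sum_add_distrib,
            Equiv.sum_comp σ (fun k => A (i.succAbove k) (i.succAbove k))]
          ring
  · exact Finset.le_sup' (fun σ : Equiv.Perm (Fin m) =>
      ∑ k, (A.submatrix i.succAbove i.succAbove) k (σ k)) (Finset.mem_univ 1)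

/-- If all off-diagonal distortion values of the symmetric matrix `A` are
negative and `E` is its distortion matrix, then the distortion values of the
tropical adjoint of `A` are given by the tropical minors of `E`. -/
theorem distortion_of_adjoint {m : ℕ} (hm : 1 ≤ m)
    (A E : Matrix (Fin (m + 1)) (Fin (m + 1)) ℝ) (hsym : A.IsSymm)
    (hE : ∀ i j, E i j = A i j - (A i i + A j j) / 2)
    (hneg : ∀ i j : Fin (m + 1), i ≠ j → A i j - (A i i + A j j) / 2 < 0) :
    ∀ i j : Fin (m + 1), i ≠ j →
      tropMinor A i j - (tropMinor A i i + tropMinor A j j) / 2 =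
        tropMinor E i j := by
  intro i j _
  have hdiag : ∀ p : Fin (m + 1), tropMinor A p p = ∑ k, A (p.succAbove k) (p.succAbove k) :=
    tropMinor_diag_s11 A hneg
  rw [hdiag i, hdiag j]
  have key : ∀ σ : Equiv.Perm (Fin m),
      ∑ k, E (i.succAbove k) (j.succAbove (σ k)) =
        ∑ k, A (i.succAbove k) (j.succAbove (σ k)) -
          (∑ k, A (i.succAbove k) (i.succAbove k)
            + ∑ k, A (j.succAbove k) (j.succAbove k)) / 2 := by
    intro σ
    simp only [hE]
    rw [Finset.sum_sub_distrib, ← Finset.sum_div, Finset.sum_add_distrib,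
      Equiv.sum_comp σ (fun k => A (j.succAbove k) (j.succAbove k))]
  unfold tropMinor tropDet
  simp only [Matrix.submatrix_apply]
  rw [show (fun σ : Equiv.Perm (Fin m) => ∑ k, E (i.succAbove k) (j.succAbove (σ k))) =
      fun σ => (∑ k, A (i.succAbove k) (j.succAbove (σ k))) -
        (∑ k, A (i.succAbove k) (i.succAbove k)
          + ∑ k, A (j.succAbove k) (j.succAbove k)) / 2 from funext key,
    sup'_sub_const]
end

section
/- Let m ≥ 2 and let A be an m×m real symmetric matrix satisfying 2·a_{i,j} < a_{i,i} + a_{j,j} for all i ≠ j. Then the tropical determinant of A equals its trace, tropDet(A) = ∑_i a_{i,i}, and the identity permutation is the unique permutation attaining the maximum in the definition of tropDet(A) (so the tropical determinant is valid, i.e. the maximum is achieved by a single component). -/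
/-- For a symmetric matrix `A` with `2 * A i j < A i i + A j j` for all `i ≠ j`,
the tropical determinant equals the trace, and the identity permutation is the
unique maximizer (the tropical determinant is valid). -/
theorem tropDet_eq_trace_of_maximal {m : ℕ} (hm : 1 ≤ m)
    (A : Matrix (Fin (m + 1)) (Fin (m + 1)) ℝ) (hsym : A.IsSymm)
    (h : ∀ i j : Fin (m + 1), i ≠ j → 2 * A i j < A i i + A j j) :
    tropDet A = ∑ i, A i i ∧
    ∀ σ : Equiv.Perm (Fin (m + 1)), σ ≠ 1 →
      ∑ k, A k (σ k) < ∑ k, A k k := by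
  have key : ∀ σ : Equiv.Perm (Fin (m + 1)), σ ≠ 1 →
      ∑ k, A k (σ k) < ∑ k, A k k := by
    intro σ hσ
    obtain ⟨k0, hk0⟩ : ∃ k, σ k ≠ k := by
      by_contra hc
      push_neg at hc
      exact hσ (Equiv.ext hc)
    have hlt : 2 * ∑ k, A k (σ k) < 2 * ∑ k, A k k := by
      have h1 : ∑ k, 2 * A k (σ k) < ∑ k, (A k k + A (σ k) (σ k)) := by
        apply Finset.sum_lt_sum
        · intro i _
          rcases eq_or_ne (σ i) i with hi | hi
          · rw [hi]; ring_nf; rfl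
          · exact (h i (σ i) (Ne.symm hi)).le
        · exact ⟨k0, Finset.mem_univ _, h k0 (σ k0) (Ne.symm hk0)⟩
      have h2 : ∑ k, A (σ k) (σ k) = ∑ k, A k k :=
        Equiv.sum_comp σ (fun k => A k k)
      rw [Finset.mul_sum]
      calc ∑ k, 2 * A k (σ k) < ∑ k, (A k k + A (σ k) (σ k)) := h1
        _ = ∑ k, A k k + ∑ k, A (σ k) (σ k) := Finset.sum_add_distrib
        _ = 2 * ∑ k, A k k := by rw [h2]; ring
    linarith
  refine ⟨le_antisymm ?_ ?_, key⟩
  · apply Finset.sup'_le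
    intro σ _
    rcases eq_or_ne σ 1 with rfl | hσ
    · simp
    · exact (key σ hσ).le
  · have := Finset.le_sup' (f := fun σ : Equiv.Perm (Fin (m + 1)) => ∑ k, A k (σ k))
      (Finset.mem_univ (1 : Equiv.Perm (Fin (m + 1))))
    simpa [tropDet, -Finset.le_sup'_iff] using this
end
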